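/- The partial sums of μ(n)/n are bounded: for every real x ≥ 1, |∑_{n ≤ x} μ(n)/n| ≤ 1. -/

import Mathlib

open Finset ArithmeticFunction
open scoped ArithmeticFunction.Moebius ArithmeticFunction.zeta

lemma divisors_eq_filter {m N : ℕ} (h1 : 1 ≤ m) (h2 : m ≤ N) :
    m.divisors = (Finset.Icc 1 N).filter (· ∣ m) := by
  ext d
  simp only [Nat.mem_divisors, mem_filter, mem_Icc]
  constructor
  · rintro ⟨hd, hm⟩
    exact ⟨⟨Nat.one_le_iff_ne_zero.2 (by rintro rfl; simp [Nat.eq_zero_of_zero_dvd hd] at h1),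
      (Nat.le_of_dvd h1 hd).trans h2⟩, hd⟩
  · rintro ⟨_, hd⟩
    exact ⟨hd, by omega⟩

lemma key (N : ℕ) (hN : 1 ≤ N) :
    ∑ n ∈ Finset.Icc 1 N, (moebius n : ℤ) * (N / n : ℕ) = 1 := by
  have hIcc : Finset.Icc 1 N = Finset.Ioc 0 N := rfl
  calc ∑ n ∈ Finset.Icc 1 N, (moebius n : ℤ) * (N / n : ℕ)
      = ∑ n ∈ Finset.Icc 1 N, ∑ m ∈ (Finset.Icc 1 N).filter (n ∣ ·), (moebius n : ℤ) := by
        refine Finset.sum_congr rfl fun n _ => ?_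
        rw [Finset.sum_const, hIcc, Nat.Ioc_filter_dvd_card_eq_div, nsmul_eq_mul, mul_comm]
    _ = ∑ m ∈ Finset.Icc 1 N, ∑ n ∈ (Finset.Icc 1 N).filter (· ∣ m), (moebius n : ℤ) := by
        simp_rw [Finset.sum_filter]
        exact Finset.sum_comm
    _ = ∑ m ∈ Finset.Icc 1 N, ∑ n ∈ m.divisors, (moebius n : ℤ) := by
        refine Finset.sum_congr rfl fun m hm => ?_
        rw [mem_Icc] at hm
        rw [divisors_eq_filter hm.1 hm.2]
    _ = ∑ m ∈ Finset.Icc 1 N, if m = 1 then 1 else 0 := by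
        refine Finset.sum_congr rfl fun m hm => ?_
        have h : (μ * ζ : ArithmeticFunction ℤ) m = (1 : ArithmeticFunction ℤ) m := by
          rw [moebius_mul_coe_zeta]
        rwa [coe_mul_zeta_apply, one_apply] at h
    _ = 1 := by
        rw [Finset.sum_ite_eq' (Finset.Icc 1 N) 1 (fun _ => (1:ℤ))]
        simp [hN]

theorem abs_sum_moebius_div_le_one (x : ℝ) (hx : 1 ≤ x) :
    |∑ n ∈ Finset.Icc 1 ⌊x⌋₊, (ArithmeticFunction.moebius n : ℝ) / n| ≤ 1 := by
  set N := ⌊x⌋₊ with hNdef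
  have hN : 1 ≤ N := Nat.le_floor (by exact_mod_cast hx)
  set S : ℝ := ∑ n ∈ Finset.Icc 1 N, (moebius n : ℝ) / n with hS
  have hNpos : (0:ℝ) < N := by exact_mod_cast hN
  -- N * S = key-sum + error-sum
  have h1 : (N:ℝ) * S = ∑ n ∈ Finset.Icc 1 N, (moebius n : ℝ) * ((N:ℝ)/n) := by
    rw [hS, Finset.mul_sum]
    exact Finset.sum_congr rfl fun n _ => by ring
  have h2 : (∑ n ∈ Finset.Icc 1 N, (moebius n : ℝ) * ((N/n : ℕ):ℝ)) = 1 := by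
    have h := key N hN
    have := congrArg (fun z : ℤ => (z : ℝ)) h
    push_cast at this
    exact this
  have h3 : (N:ℝ) * S - 1 =
      ∑ n ∈ Finset.Icc 1 N, (moebius n : ℝ) * ((N:ℝ)/n - ((N/n : ℕ):ℝ)) := by
    rw [h1, ← h2, ← Finset.sum_sub_distrib]
    exact Finset.sum_congr rfl fun n _ => by ring
  have hbound : ∀ n ∈ Finset.Icc 1 N,
      |(moebius n : ℝ) * ((N:ℝ)/n - ((N/n : ℕ):ℝ))| ≤ if n = N then 0 else 1 := by
    intro n hn
    rw [Finset.mem_Icc] at hn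
    have hn0 : (0:ℝ) < n := by exact_mod_cast hn.1
    by_cases h : n = N
    · subst h
      simp [Nat.div_self hn.1, div_self (ne_of_gt hn0)]
    · simp only [h, if_false]
      have hμ : |(moebius n : ℝ)| ≤ 1 := by exact_mod_cast ArithmeticFunction.abs_moebius_le_one
      have hlo : ((N/n : ℕ):ℝ) ≤ (N:ℝ)/n := by
        rw [le_div_iff₀ hn0]
        exact_mod_cast Nat.div_mul_le_self N n
      have hhi : (N:ℝ)/n < ((N/n : ℕ):ℝ) + 1 := by
        rw [div_lt_iff₀ hn0]
        have h' : N < (N / n + 1) * n := by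
          rw [add_mul, one_mul]
          exact Nat.lt_div_mul_add hn.1
        exact_mod_cast h'
      rw [abs_mul]
      calc |(moebius n : ℝ)| * |(N:ℝ)/n - ((N/n : ℕ):ℝ)| ≤ 1 * 1 := by
            apply mul_le_mul hμ _ (abs_nonneg _) zero_le_one
            rw [abs_le]; constructor <;> [linarith; linarith]
        _ = 1 := one_mul 1
  have h4 : |(N:ℝ) * S - 1| ≤ (N:ℝ) - 1 := by
    calc |(N:ℝ) * S - 1| ≤ ∑ n ∈ Finset.Icc 1 N,
          |(moebius n : ℝ) * ((N:ℝ)/n - ((N/n : ℕ):ℝ))| := by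
          rw [h3]; exact Finset.abs_sum_le_sum_abs _ _
      _ ≤ ∑ n ∈ Finset.Icc 1 N, (if n = N then (0:ℝ) else 1) := Finset.sum_le_sum hbound
      _ = (N:ℝ) - 1 := by
          have hmem : N ∈ Finset.Icc 1 N := Finset.mem_Icc.2 ⟨hN, le_refl N⟩
          rw [← Finset.insert_erase hmem, Finset.sum_insert (Finset.notMem_erase _ _)]
          rw [if_pos rfl, zero_add]
          rw [Finset.sum_congr rfl (fun n hn => if_neg (Finset.ne_of_mem_erase hn))]
          rw [Finset.sum_const, Finset.card_erase_of_mem hmem, Nat.card_Icc]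
          simp only [nsmul_eq_mul, mul_one]
          rw [Nat.cast_sub (by omega)]
          push_cast
          ring
  have h5 : |(N:ℝ) * S| ≤ (N:ℝ) := by
    calc |(N:ℝ) * S| = |((N:ℝ) * S - 1) + 1| := by ring_nf
      _ ≤ |(N:ℝ) * S - 1| + 1 := by exact (abs_add_le _ _).trans (by simp)
      _ ≤ (N:ℝ) := by linarith
  rw [abs_mul, abs_of_pos hNpos] at h5
  calc |S| = (N:ℝ) * |S| / N := by field_simp
    _ ≤ (N:ℝ) / N := by gcongr
    _ = 1 := div_self (ne_of_gt hNpos)
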